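/- arXiv:1610.03999 — 2 statements merged into one kernel-verified Lean document; each statement's English description precedes it below -/
import Mathlib

section
/- In the augmented toroidal grid AT(2k,2k), the distance between two vertices u and v equals min{d_T(u,v), 2k+1 − d_T(u,v)}, where d_T denotes distance in the toroidal grid T(2k,2k) = C_{2k} □ C_{2k}. -/
open SimpleGraph

/-- The toroidal grid `T(2k,2k) = C_{2k} □ C_{2k}`. -/
def torusGrid (k : ℕ) : SimpleGraph (ZMod (2*k) × ZMod (2*k)) :=
  SimpleGraph.fromRel fun a b =>
    (a.1 = b.1 ∧ b.2 = a.2 + 1) ∨ (a.2 = b.2 ∧ b.1 = a.1 + 1)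

/-- The augmented toroidal grid `AT(2k,2k)`: the toroidal grid `T(2k,2k)` with
an edge added between each vertex `v` and its antipodal vertex `v + (k,k)`. -/
def augTorusGrid (k : ℕ) : SimpleGraph (ZMod (2*k) × ZMod (2*k)) :=
  SimpleGraph.fromRel fun a b =>
    (a.1 = b.1 ∧ b.2 = a.2 + 1) ∨ (a.2 = b.2 ∧ b.1 = a.1 + 1) ∨
    b = a + ((k : ZMod (2*k)), (k : ZMod (2*k)))

namespace AugTorusAux
def cd (k : ℕ) (x : ZMod (2*k)) : ℕ := min x.val (2*k - x.val)
variable {k : ℕ}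

lemma nz (hk : 1 ≤ k) : NeZero (2*k) := ⟨by omega⟩

lemma val_one' (hk : 1 ≤ k) : (1 : ZMod (2*k)).val = 1 :=
  ZMod.val_one'' (by omega)

lemma one_ne_zero' (hk : 1 ≤ k) : (1 : ZMod (2*k)) ≠ 0 := by
  haveI := nz hk
  intro h
  have := val_one' hk
  rw [h, ZMod.val_zero] at this
  exact absurd this (by omega)

lemma val_add_one (hk : 1 ≤ k) (x : ZMod (2*k)) :
    (x + 1).val = if x.val + 1 = 2*k then 0 else x.val + 1 := by
  haveI := nz hk
  have hx := ZMod.val_lt x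
  rw [ZMod.val_add, val_one' hk]
  split
  · rename_i h; rw [h, Nat.mod_self]
  · exact Nat.mod_eq_of_lt (by omega)

lemma val_sub_one (hk : 1 ≤ k) (x : ZMod (2*k)) :
    (x - 1).val = if x.val = 0 then 2*k - 1 else x.val - 1 := by
  haveI := nz hk
  have h := val_add_one hk (x - 1)
  rw [sub_add_cancel] at h
  have h1 := ZMod.val_lt x
  have h2 := ZMod.val_lt (x - 1)
  split <;> rename_i hc <;> [skip; skip] <;> split at h <;> omega

lemma cd_le (hk : 1 ≤ k) (x : ZMod (2*k)) : cd k x ≤ k := by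
  haveI := nz hk
  have := ZMod.val_lt x
  unfold cd; omega

lemma cd_eq_zero (hk : 1 ≤ k) (x : ZMod (2*k)) : cd k x = 0 ↔ x = 0 := by
  haveI := nz hk
  have := ZMod.val_lt x
  rw [← ZMod.val_eq_zero]
  unfold cd; omega

lemma cd_add_one (hk : 1 ≤ k) (x : ZMod (2*k)) :
    cd k (x + 1) ≤ cd k x + 1 ∧ cd k x ≤ cd k (x + 1) + 1 := by
  haveI := nz hk
  have := ZMod.val_lt x
  unfold cd
  rw [val_add_one hk]
  split <;> omega

lemma cd_sub_one (hk : 1 ≤ k) (x : ZMod (2*k)) :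
    cd k (x - 1) ≤ cd k x + 1 ∧ cd k x ≤ cd k (x - 1) + 1 := by
  have h := cd_add_one hk (x - 1)
  rw [sub_add_cancel] at h
  omega

lemma cd_step (hk : 1 ≤ k) (x : ZMod (2*k)) (h : cd k x ≠ 0) :
    cd k (x + 1) + 1 = cd k x ∨ cd k (x - 1) + 1 = cd k x := by
  haveI := nz hk
  have hx := ZMod.val_lt x
  unfold cd at *
  rw [val_add_one hk, val_sub_one hk]
  by_cases hc : x.val ≤ k
  · right; split <;> omega
  · left; split <;> omega

lemma val_k (hk : 1 ≤ k) : ((k : ℕ) : ZMod (2*k)).val = k := by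
  haveI := nz hk
  exact ZMod.val_cast_of_lt (by omega)

lemma k_ne_zero (hk : 1 ≤ k) : ((k : ℕ) : ZMod (2*k)) ≠ 0 := by
  haveI := nz hk
  intro h
  have := val_k hk
  rw [h, ZMod.val_zero] at this
  omega

lemma k_add_k (hk : 1 ≤ k) : ((k : ℕ) : ZMod (2*k)) + (k : ℕ) = 0 := by
  rw [← Nat.cast_add]
  have : k + k = 2*k := by ring
  rw [this, ZMod.natCast_self]

lemma cd_add_k (hk : 1 ≤ k) (x : ZMod (2*k)) :
    cd k (x + (k : ℕ)) = k - cd k x := by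
  haveI := nz hk
  have hx := ZMod.val_lt x
  unfold cd
  rw [ZMod.val_add, val_k hk]
  by_cases hc : x.val + k < 2*k
  · rw [Nat.mod_eq_of_lt hc]; omega
  · have : x.val + k - 2*k < 2*k := by omega
    have he : x.val + k = (x.val + k - 2*k) + 1 * (2*k) := by omega
    rw [he, Nat.add_mul_mod_self_right, Nat.mod_eq_of_lt this]
    omega


/-- the explicit grid distance -/
def Dst (k : ℕ) (u v : ZMod (2*k) × ZMod (2*k)) : ℕ :=
  cd k (v.1 - u.1) + cd k (v.2 - u.2)


lemma Dst_le (hk : 1 ≤ k) (u v : ZMod (2*k) × ZMod (2*k)) : Dst k u v ≤ 2*k := by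
  have h1 := cd_le hk (v.1 - u.1); have h2 := cd_le hk (v.2 - u.2)
  unfold Dst; omega

lemma Dst_self (u : ZMod (2*k) × ZMod (2*k)) : Dst k u u = 0 := by
  simp [Dst, cd]

lemma Dst_eq_zero (hk : 1 ≤ k) {u v : ZMod (2*k) × ZMod (2*k)} (h : Dst k u v = 0) :
    u = v := by
  unfold Dst at h
  have h1 := (cd_eq_zero hk (v.1 - u.1)).mp (by omega)
  have h2 := (cd_eq_zero hk (v.2 - u.2)).mp (by omega)
  have e1 : u.1 = v.1 := by rw [← sub_eq_zero]; rw [← neg_sub]; simp [h1]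
  have e2 : u.2 = v.2 := by rw [← sub_eq_zero]; rw [← neg_sub]; simp [h2]
  exact Prod.ext e1 e2

lemma Dst_antipode (hk : 1 ≤ k) (u v : ZMod (2*k) × ZMod (2*k)) :
    Dst k (u + (((k : ℕ) : ZMod (2*k)), ((k : ℕ) : ZMod (2*k)))) v = 2*k - Dst k u v := by
  have key : ∀ x : ZMod (2*k), x - (k : ℕ) = x + (k : ℕ) := by
    intro x
    rw [sub_eq_iff_eq_add, add_assoc, k_add_k hk, add_zero]
  have e1 : v.1 - (u + (((k : ℕ) : ZMod (2*k)), ((k : ℕ) : ZMod (2*k)))).1 = (v.1 - u.1) + (k : ℕ) := by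
    show v.1 - (u.1 + (k : ℕ)) = _
    rw [← key]; ring
  have e2 : v.2 - (u + (((k : ℕ) : ZMod (2*k)), ((k : ℕ) : ZMod (2*k)))).2 = (v.2 - u.2) + (k : ℕ) := by
    show v.2 - (u.2 + (k : ℕ)) = _
    rw [← key]; ring
  have l1 := cd_le hk (v.1 - u.1); have l2 := cd_le hk (v.2 - u.2)
  unfold Dst
  rw [e1, e2, cd_add_k hk, cd_add_k hk]
  omega

/-- case analysis for torus adjacency: w is u with one coordinate shifted by ±1 -/
lemma torus_adj_cases (hk : 1 ≤ k) {u w : ZMod (2*k) × ZMod (2*k)}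
    (h : (torusGrid k).Adj u w) :
    (w.1 = u.1 ∧ (w.2 = u.2 + 1 ∨ w.2 = u.2 - 1)) ∨
    (w.2 = u.2 ∧ (w.1 = u.1 + 1 ∨ w.1 = u.1 - 1)) := by
  rw [torusGrid, fromRel_adj] at h
  obtain ⟨-, h⟩ := h
  rcases h with (⟨h1, h2⟩ | ⟨h1, h2⟩) | (⟨h1, h2⟩ | ⟨h1, h2⟩)
  · exact Or.inl ⟨h1.symm, Or.inl h2⟩
  · exact Or.inr ⟨h1.symm, Or.inl h2⟩
  · exact Or.inl ⟨h1, Or.inr (by rw [h2]; ring)⟩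
  · exact Or.inr ⟨h1, Or.inr (by rw [h2]; ring)⟩

lemma Dst_adj (hk : 1 ≤ k) {u w : ZMod (2*k) × ZMod (2*k)}
    (h : (torusGrid k).Adj u w) (v : ZMod (2*k) × ZMod (2*k)) :
    Dst k w v ≤ Dst k u v + 1 ∧ Dst k u v ≤ Dst k w v + 1 := by
  unfold Dst
  rcases torus_adj_cases hk h with ⟨h1, h2 | h2⟩ | ⟨h1, h2 | h2⟩ <;>
    rw [h1, h2] <;>
    [ (have e : v.2 - (u.2 + 1) = (v.2 - u.2) - 1 := by ring);
      (have e : v.2 - (u.2 - 1) = (v.2 - u.2) + 1 := by ring);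
      (have e : v.1 - (u.1 + 1) = (v.1 - u.1) - 1 := by ring);
      (have e : v.1 - (u.1 - 1) = (v.1 - u.1) + 1 := by ring)] <;>
    rw [e] <;>
    [ (have := cd_sub_one hk (v.2 - u.2)); (have := cd_add_one hk (v.2 - u.2));
      (have := cd_sub_one hk (v.1 - u.1)); (have := cd_add_one hk (v.1 - u.1))] <;>
    omega

lemma exists_adj_step (hk : 1 ≤ k) {u v : ZMod (2*k) × ZMod (2*k)}
    (h : Dst k u v ≠ 0) :
    ∃ w, (torusGrid k).Adj u w ∧ Dst k w v + 1 = Dst k u v := by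
  have one_ne : (1 : ZMod (2*k)) ≠ 0 := one_ne_zero' hk
  by_cases h1 : cd k (v.1 - u.1) = 0
  · -- move in second coordinate
    have h2 : cd k (v.2 - u.2) ≠ 0 := by unfold Dst at h; omega
    rcases cd_step hk _ h2 with hs | hs
    · refine ⟨(u.1, u.2 - 1), ?_, ?_⟩
      · rw [torusGrid, fromRel_adj]
        refine ⟨?_, Or.inr (Or.inl ⟨rfl, by ring⟩)⟩
        intro he
        have h2' : u.2 = u.2 - 1 := congrArg Prod.snd he
        exact one_ne (by linear_combination h2')
      · show cd k (v.1 - u.1) + cd k (v.2 - (u.2 - 1)) + 1 = _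
        have e : v.2 - (u.2 - 1) = (v.2 - u.2) + 1 := by ring
        unfold Dst; rw [e]; omega
    · refine ⟨(u.1, u.2 + 1), ?_, ?_⟩
      · rw [torusGrid, fromRel_adj]
        refine ⟨?_, Or.inl (Or.inl ⟨rfl, rfl⟩)⟩
        intro he
        have h2' : u.2 = u.2 + 1 := congrArg Prod.snd he
        exact one_ne (by linear_combination -h2')
      · show cd k (v.1 - u.1) + cd k (v.2 - (u.2 + 1)) + 1 = _
        have e : v.2 - (u.2 + 1) = (v.2 - u.2) - 1 := by ring
        unfold Dst; rw [e]; omega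
  · rcases cd_step hk _ h1 with hs | hs
    · refine ⟨(u.1 - 1, u.2), ?_, ?_⟩
      · rw [torusGrid, fromRel_adj]
        refine ⟨?_, Or.inr (Or.inr ⟨rfl, by ring⟩)⟩
        intro he
        have h1' : u.1 = u.1 - 1 := congrArg Prod.fst he
        exact one_ne (by linear_combination h1')
      · show cd k (v.1 - (u.1 - 1)) + cd k (v.2 - u.2) + 1 = _
        have e : v.1 - (u.1 - 1) = (v.1 - u.1) + 1 := by ring
        unfold Dst; rw [e]; omega
    · refine ⟨(u.1 + 1, u.2), ?_, ?_⟩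
      · rw [torusGrid, fromRel_adj]
        refine ⟨?_, Or.inl (Or.inr ⟨rfl, rfl⟩)⟩
        intro he
        have h1' : u.1 = u.1 + 1 := congrArg Prod.fst he
        exact one_ne (by linear_combination -h1')
      · show cd k (v.1 - (u.1 + 1)) + cd k (v.2 - u.2) + 1 = _
        have e : v.1 - (u.1 + 1) = (v.1 - u.1) - 1 := by ring
        unfold Dst; rw [e]; omega

lemma exists_walk (hk : 1 ≤ k) :
    ∀ (n : ℕ) (u v : ZMod (2*k) × ZMod (2*k)), Dst k u v = n →
      ∃ p : (torusGrid k).Walk u v, p.length = n := by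
  intro n
  induction n with
  | zero =>
    intro u v h
    obtain rfl := Dst_eq_zero hk h
    exact ⟨Walk.nil, rfl⟩
  | succ n ih =>
    intro u v h
    obtain ⟨w, hadj, hw⟩ := exists_adj_step hk (u := u) (v := v) (by omega)
    obtain ⟨p, hp⟩ := ih w v (by omega)
    exact ⟨Walk.cons hadj p, by simp [hp]⟩

lemma walk_lower (hk : 1 ≤ k) {u v : ZMod (2*k) × ZMod (2*k)}
    (p : (torusGrid k).Walk u v) : Dst k u v ≤ p.length := by
  induction p with
  | nil => simp [Dst_self]
  | @cons a b c hadj p ih =>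
    have := Dst_adj hk hadj c
    simp only [Walk.length_cons]
    omega

lemma torus_dist (hk : 1 ≤ k) (u v : ZMod (2*k) × ZMod (2*k)) :
    (torusGrid k).dist u v = Dst k u v := by
  obtain ⟨p, hp⟩ := exists_walk hk (Dst k u v) u v rfl
  refine le_antisymm (hp ▸ SimpleGraph.dist_le p) ?_
  obtain ⟨q, hq⟩ := (Reachable.exists_walk_length_eq_dist ⟨p⟩ : _)
  rw [← hq]
  exact walk_lower hk q

lemma torus_le_aug : torusGrid k ≤ augTorusGrid k := by
  intro a b hab
  rw [torusGrid, fromRel_adj] at hab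
  rw [augTorusGrid, fromRel_adj]
  tauto

lemma aug_adj_antipode (hk : 1 ≤ k) (u : ZMod (2*k) × ZMod (2*k)) :
    (augTorusGrid k).Adj u (u + (((k : ℕ) : ZMod (2*k)), ((k : ℕ) : ZMod (2*k)))) := by
  rw [augTorusGrid, fromRel_adj]
  refine ⟨?_, Or.inl (Or.inr (Or.inr rfl))⟩
  intro he
  have hh : u.1 = u.1 + (k : ℕ) := congrArg Prod.fst he
  exact k_ne_zero hk (by linear_combination -hh)

lemma antipode_antipode (hk : 1 ≤ k) (u : ZMod (2*k) × ZMod (2*k)) :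
    u + (((k : ℕ) : ZMod (2*k)), ((k : ℕ) : ZMod (2*k)))
      + (((k : ℕ) : ZMod (2*k)), ((k : ℕ) : ZMod (2*k))) = u := by
  have := k_add_k hk
  ext <;> simp [add_assoc, this]

lemma aug_adj_cases (hk : 1 ≤ k) {u w : ZMod (2*k) × ZMod (2*k)}
    (h : (augTorusGrid k).Adj u w) :
    (torusGrid k).Adj u w ∨
      w = u + (((k : ℕ) : ZMod (2*k)), ((k : ℕ) : ZMod (2*k))) := by
  have hne := h.ne
  rw [augTorusGrid, fromRel_adj] at h
  obtain ⟨-, h⟩ := h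
  rcases h with (h | h | h) | (h | h | h)
  · exact Or.inl (by rw [torusGrid, fromRel_adj]; exact ⟨hne, Or.inl (Or.inl h)⟩)
  · exact Or.inl (by rw [torusGrid, fromRel_adj]; exact ⟨hne, Or.inl (Or.inr h)⟩)
  · exact Or.inr h
  · exact Or.inl (by rw [torusGrid, fromRel_adj]; exact ⟨hne, Or.inr (Or.inl h)⟩)
  · exact Or.inl (by rw [torusGrid, fromRel_adj]; exact ⟨hne, Or.inr (Or.inr h)⟩)
  · exact Or.inr (by rw [h, antipode_antipode hk])

lemma aug_walk_lower (hk : 1 ≤ k) {u v : ZMod (2*k) × ZMod (2*k)}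
    (p : (augTorusGrid k).Walk u v) :
    min (Dst k u v) (2*k+1 - Dst k u v) ≤ p.length := by
  induction p with
  | nil => simp [Dst_self]
  | @cons u w v hadj p ih =>
    simp only [Walk.length_cons]
    have hu := Dst_le hk u v
    have hw := Dst_le hk w v
    rcases aug_adj_cases hk hadj with ht | ht
    · have := Dst_adj hk ht v
      omega
    · have := Dst_antipode hk u v
      rw [← ht] at this
      omega

end AugTorusAux

open AugTorusAux in
/-- In `AT(2k,2k)`, the distance between `u` and `v` is
`min (d_T(u,v)) (2k+1 - d_T(u,v))`, where `d_T` is the distance in `T(2k,2k)`. -/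
theorem augTorusGrid_dist (k : ℕ) (hk : 1 ≤ k) (u v : ZMod (2*k) × ZMod (2*k)) :
    (augTorusGrid k).dist u v =
      min ((torusGrid k).dist u v) (2*k+1 - (torusGrid k).dist u v) := by
  rw [torus_dist hk u v]
  have hle := Dst_le hk u v
  have hant := Dst_antipode hk u v
  apply le_antisymm
  · apply le_min
    · obtain ⟨p, hp⟩ := exists_walk hk (Dst k u v) u v rfl
      have := SimpleGraph.dist_le (p.mapLe torus_le_aug)
      simpa [hp] using this
    · obtain ⟨q, hq⟩ := exists_walk hk
        (Dst k (u + (((k : ℕ) : ZMod (2*k)), ((k : ℕ) : ZMod (2*k)))) v)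
        (u + (((k : ℕ) : ZMod (2*k)), ((k : ℕ) : ZMod (2*k)))) v rfl
      have hd := SimpleGraph.dist_le
        (Walk.cons (aug_adj_antipode hk u) (q.mapLe torus_le_aug))
      simp only [Walk.length_cons, Walk.length_map] at hd
      omega
  · obtain ⟨p, hp⟩ := exists_walk hk (Dst k u v) u v rfl
    have hreach : (augTorusGrid k).Reachable u v := ⟨p.mapLe torus_le_aug⟩
    obtain ⟨r, hr⟩ := hreach.exists_walk_length_eq_dist
    rw [← hr]
    exact aug_walk_lower hk r
end

section
/- The augmented toroidal grid AT(2k,2k) is a subgraph of the projective hypercube PC(2k), has odd-girth exactly 2k+1, is vertex-transitive, and every two of its vertices lie on a common cycle of length 2k+1. -/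
open SimpleGraph

/-- The projective hypercube `PC(2k)`: the Cayley graph on `ℤ₂^{2k}` with connection
set consisting of the `2k` standard basis vectors and the all-ones vector. -/
def PC (k : ℕ) : SimpleGraph (Fin (2*k) → ZMod 2) :=
  SimpleGraph.fromRel fun x y =>
    (∃ i : Fin (2*k), y = x + fun j => if j = i then 1 else 0) ∨
    y = x + fun _ => 1

/-- `G` has odd-girth at least `n`: every odd cycle has length at least `n`. -/
def oddGirthAtLeast {V : Type*} (G : SimpleGraph V) (n : ℕ) : Prop :=
  ∀ (x : V) (w : G.Walk x x), w.IsCycle → Odd w.length → n ≤ w.length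

/-- `G` has odd-girth exactly `n`. -/
def hasOddGirth {V : Type*} (G : SimpleGraph V) (n : ℕ) : Prop :=
  oddGirthAtLeast G n ∧ ∃ (x : V) (w : G.Walk x x), w.IsCycle ∧ w.length = n


/-- Walk along a given vertex sequence. -/
def walkAlong {V : Type*} {G : SimpleGraph V} (vf : ℕ → V) :
    (n t0 : ℕ) → (h : ∀ t, t0 ≤ t → t < t0 + n → G.Adj (vf t) (vf (t+1))) →
    G.Walk (vf t0) (vf (t0 + n))
  | 0, t0, _ => Walk.nil.copy rfl (by rw [Nat.add_zero])
  | n+1, t0, h =>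
    (Walk.cons (h t0 le_rfl (by omega))
      (walkAlong vf n (t0+1) (fun t ht ht' => h t (by omega) (by omega)))).copy rfl
      (congrArg vf (by omega))

lemma walkAlong_length {V : Type*} {G : SimpleGraph V} (vf : ℕ → V) :
    ∀ (n t0 : ℕ) (h : ∀ t, t0 ≤ t → t < t0 + n → G.Adj (vf t) (vf (t+1))),
      (walkAlong vf n t0 h).length = n
  | 0, t0, h => by simp [walkAlong]
  | n+1, t0, h => by
    simp [walkAlong, walkAlong_length vf n (t0+1)]

lemma walkAlong_support {V : Type*} {G : SimpleGraph V} (vf : ℕ → V) :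
    ∀ (n t0 : ℕ) (h : ∀ t, t0 ≤ t → t < t0 + n → G.Adj (vf t) (vf (t+1))),
      (walkAlong vf n t0 h).support = (List.range (n+1)).map (fun i => vf (t0 + i))
  | 0, t0, h => by simp [walkAlong, List.range_succ]
  | n+1, t0, h => by
    rw [walkAlong]
    rw [Walk.support_copy, Walk.support_cons,
      walkAlong_support vf n (t0+1), List.range_succ_eq_map (n := n+1)]
    rw [List.map_cons, List.map_map, Nat.add_zero]
    congr 1
    refine List.map_congr_left fun i _ => ?_
    simp only [Function.comp_apply]
    congr 1
    omega

lemma walkAlong_edges {V : Type*} {G : SimpleGraph V} (vf : ℕ → V) :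
    ∀ (n t0 : ℕ) (h : ∀ t, t0 ≤ t → t < t0 + n → G.Adj (vf t) (vf (t+1)))
      (e : Sym2 V), e ∈ (walkAlong vf n t0 h).edges →
      ∃ t, t0 ≤ t ∧ t < t0 + n ∧ e = s(vf t, vf (t+1))
  | 0, t0, h => by simp [walkAlong]
  | n+1, t0, h => by
    intro e he
    rw [walkAlong] at he
    simp only [Walk.edges_copy, Walk.edges_cons, List.mem_cons] at he
    rcases he with he | he
    · exact ⟨t0, le_rfl, by omega, he⟩
    · obtain ⟨t, ht1, ht2, ht3⟩ := walkAlong_edges vf n (t0+1) _ e he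
      exact ⟨t, by omega, by omega, ht3⟩

abbrev ATV (k : ℕ) := ZMod (2*k) × ZMod (2*k)

lemma master_cycle (k : ℕ) (hk : 1 ≤ k) (vf : ℕ → ATV k)
    (hadj : ∀ t, t < 2*k → (augTorusGrid k).Adj (vf t) (vf (t+1)))
    (hanti : vf (2*k) = vf 0 + ((k : ZMod (2*k)), (k : ZMod (2*k))))
    (φ : ATV k → ZMod (2*k)) (hφ : ∀ t, t ≤ 2*k → φ (vf t) = φ (vf 0) + (t : ZMod (2*k))) :
    ∃ (x : ATV k) (w : (augTorusGrid k).Walk x x),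
      w.IsCycle ∧ w.length = 2*k+1 ∧ ∀ t, t ≤ 2*k → vf t ∈ w.support := by
  haveI : NeZero (2*k) := ⟨by omega⟩
  have hk0 : ((k : ZMod (2*k)) : ZMod (2*k)) ≠ 0 := by
    rw [Ne, ZMod.natCast_eq_zero_iff]
    intro hdvd
    have := Nat.le_of_dvd (by omega) hdvd
    omega
  have hne : vf 0 ≠ vf (2*k) := by
    intro h
    rw [hanti] at h
    have : ((k : ZMod (2*k)), (k : ZMod (2*k))) = (0 : ATV k) := by
      have := congrArg (fun x => x - vf 0) h
      simpa using this.symm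
    exact hk0 (congrArg Prod.fst this)
  have hinj : ∀ t ≤ 2*k, ∀ t' ≤ 2*k, vf t = vf t' → t = t' := by
    intro t ht t' ht' h
    have h1 : φ (vf 0) + (t : ZMod (2*k)) = φ (vf 0) + (t' : ZMod (2*k)) := by
      rw [← hφ t ht, ← hφ t' ht', h]
    have h2 : (t : ZMod (2*k)) = (t' : ZMod (2*k)) := by
      exact add_left_cancel h1
    have h3 : t % (2*k) = t' % (2*k) := by
      have := congrArg ZMod.val h2
      rwa [ZMod.val_natCast, ZMod.val_natCast] at this
    rcases Nat.lt_or_ge t (2*k) with h4 | h4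
    · rcases Nat.lt_or_ge t' (2*k) with h5 | h5
      · rwa [Nat.mod_eq_of_lt h4, Nat.mod_eq_of_lt h5] at h3
      · have ht'e : t' = 2*k := by omega
        rw [ht'e] at h
        rw [Nat.mod_eq_of_lt h4, ht'e, Nat.mod_self] at h3
        subst h3
        exact absurd h hne
    · have hte : t = 2*k := by omega
      rcases Nat.lt_or_ge t' (2*k) with h5 | h5
      · rw [hte] at h
        rw [hte, Nat.mod_self, Nat.mod_eq_of_lt h5] at h3
        subst h3
        exact absurd h.symm hne
      · omega
  have hA : (augTorusGrid k).Adj (vf (2*k)) (vf 0) := by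
    rw [augTorusGrid, fromRel_adj]
    refine ⟨fun h => hne h.symm, Or.inl (Or.inr (Or.inr ?_))⟩
    rw [hanti]
    have : ((k : ZMod (2*k)) + (k : ZMod (2*k))) = 0 := by
      have : (((2*k : ℕ)) : ZMod (2*k)) = 0 := ZMod.natCast_self _
      push_cast at this
      linear_combination this
    ext <;> simp [add_assoc, this]
  set P : (augTorusGrid k).Walk (vf 0) (vf (2*k)) :=
    (walkAlong vf (2*k) 0 (fun t _ ht' => hadj t (by omega))).copy rfl
      (congrArg vf (Nat.zero_add _)) with hP
  have hPsupp : P.support = (List.range (2*k+1)).map (fun i => vf i) := by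
    rw [hP, Walk.support_copy, walkAlong_support]
    refine List.map_congr_left fun i _ => by rw [Nat.zero_add]
  have hPpath : P.IsPath := by
    rw [Walk.isPath_def, hPsupp]
    refine List.Nodup.map_on ?_ List.nodup_range
    intro x hx y hy hxy
    rw [List.mem_range] at hx hy
    exact hinj x (by omega) y (by omega) hxy
  have hPedges : s(vf (2*k), vf 0) ∉ P.edges := by
    intro hmem
    rw [hP, Walk.edges_copy] at hmem
    obtain ⟨t, ht0, ht1, ht2⟩ := walkAlong_edges vf (2*k) 0 _ _ hmem
    rw [Sym2.eq_iff] at ht2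
    rcases ht2 with ⟨h1, h2⟩ | ⟨h1, h2⟩
    · have := hinj (2*k) le_rfl t (by omega) h1
      omega
    · have e1 := hinj (2*k) le_rfl (t+1) (by omega) h1
      have e2 := hinj 0 (by omega) t (by omega) h2
      omega
  refine ⟨vf (2*k), Walk.cons hA P, ?_, ?_, ?_⟩
  · exact (Walk.cons_isCycle_iff P hA).2 ⟨hPpath, hPedges⟩
  · rw [Walk.length_cons, hP, Walk.length_copy, walkAlong_length]
  · intro t ht
    rw [Walk.support_cons, hPsupp]
    exact List.mem_cons_of_mem _ (List.mem_map.2 ⟨t, List.mem_range.2 (by omega), rfl⟩)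


lemma AT_one_ne_zero (k : ℕ) (hk : 1 ≤ k) : (1 : ZMod (2*k)) ≠ 0 := by
  haveI : NeZero (2*k) := ⟨by omega⟩
  intro h
  have h1 : (((1:ℕ)) : ZMod (2*k)) = 0 := by push_cast; exact h
  rw [ZMod.natCast_eq_zero_iff] at h1
  have := Nat.le_of_dvd (by omega) h1
  omega

lemma AT_adj_of (k : ℕ) (hk : 1 ≤ k) (a b : ATV k)
    (h : (a.1 = b.1 ∧ b.2 = a.2 + 1) ∨ (a.2 = b.2 ∧ b.1 = a.1 + 1) ∨
         (a.1 = b.1 ∧ a.2 = b.2 + 1) ∨ (a.2 = b.2 ∧ a.1 = b.1 + 1)) :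
    (augTorusGrid k).Adj a b := by
  have hone := AT_one_ne_zero k hk
  rw [augTorusGrid, fromRel_adj]
  constructor
  · rintro rfl
    rcases h with ⟨_, h2⟩ | ⟨_, h2⟩ | ⟨_, h2⟩ | ⟨_, h2⟩ <;>
      exact hone (by linear_combination -h2)
  · rcases h with h | h | h | h
    · exact Or.inl (Or.inl h)
    · exact Or.inl (Or.inr (Or.inl h))
    · exact Or.inr (Or.inl ⟨h.1.symm, h.2⟩)
    · exact Or.inr (Or.inr (Or.inl ⟨h.1.symm, h.2⟩))

/-- Case where both coordinate differences have values at most `k`: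
monotone staircase cycle. -/
lemma part4_caseA (k : ℕ) (hk : 1 ≤ k) (u v : ATV k)
    (ha : (v.1 - u.1).val ≤ k) (hb : (v.2 - u.2).val ≤ k) :
    ∃ (x : ATV k) (w : (augTorusGrid k).Walk x x),
      w.IsCycle ∧ w.length = 2*k+1 ∧ u ∈ w.support ∧ v ∈ w.support := by
  haveI : NeZero (2*k) := ⟨by omega⟩
  set a := (v.1 - u.1).val with hadef
  set b := (v.2 - u.2).val with hbdef
  set c1 : ℕ → ℕ := fun t => if t ≤ a then t else if t ≤ a+b then a else if t ≤ k+b then t-b else k with hc1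
  set c2 : ℕ → ℕ := fun t => if t ≤ a then 0 else if t ≤ a+b then t-a else if t ≤ k+b then b else t-k with hc2
  set vf : ℕ → ATV k := fun t => (u.1 + ((c1 t : ℕ) : ZMod (2*k)), u.2 + ((c2 t : ℕ) : ZMod (2*k))) with hvf
  have hstep : ∀ t, t < 2*k →
      (c1 (t+1) = c1 t + 1 ∧ c2 (t+1) = c2 t) ∨ (c1 (t+1) = c1 t ∧ c2 (t+1) = c2 t + 1) := by
    intro t ht
    simp only [hc1, hc2]
    split_ifs <;> omega
  have hsum : ∀ t, t ≤ 2*k → c1 t + c2 t = t := by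
    intro t ht
    simp only [hc1, hc2]
    split_ifs <;> omega
  have hadj : ∀ t, t < 2*k → (augTorusGrid k).Adj (vf t) (vf (t+1)) := by
    intro t ht
    refine AT_adj_of k hk _ _ ?_
    rcases hstep t ht with ⟨h1, h2⟩ | ⟨h1, h2⟩
    · refine Or.inr (Or.inl ⟨by rw [hvf]; simp [h2], ?_⟩)
      rw [hvf]
      simp only [h1]
      push_cast
      ring
    · refine Or.inl ⟨by rw [hvf]; simp [h1], ?_⟩
      rw [hvf]
      simp only [h2]
      push_cast
      ring
  have hanti : vf (2*k) = vf 0 + ((k : ZMod (2*k)), (k : ZMod (2*k))) := by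
    have e1 : c1 (2*k) = k := by simp only [hc1]; split_ifs <;> omega
    have e2 : c2 (2*k) = k := by simp only [hc2]; split_ifs <;> omega
    have e3 : c1 0 = 0 := by simp only [hc1]; split_ifs <;> omega
    have e4 : c2 0 = 0 := by simp only [hc2]; split_ifs <;> omega
    rw [hvf]
    simp only [e1, e2, e3, e4]
    rw [Prod.ext_iff]
    constructor <;> · simp only [Prod.fst_add, Prod.snd_add] <;> push_cast <;> ring
  obtain ⟨x, w, hcyc, hlen, hsupp⟩ := master_cycle k hk vf hadj hanti
    (fun p => p.1 + p.2) (by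
      intro t ht
      simp only [hvf]
      have e3 : c1 0 = 0 := by simp only [hc1]; split_ifs <;> omega
      have e4 : c2 0 = 0 := by simp only [hc2]; split_ifs <;> omega
      rw [e3, e4]
      have : ((c1 t : ℕ) : ZMod (2*k)) + ((c2 t : ℕ) : ZMod (2*k)) = (t : ZMod (2*k)) := by
        rw [← Nat.cast_add, hsum t ht]
      push_cast at this ⊢
      linear_combination this)
  refine ⟨x, w, hcyc, hlen, ?_, ?_⟩
  · have e3 : c1 0 = 0 := by simp only [hc1]; split_ifs <;> omega
    have e4 : c2 0 = 0 := by simp only [hc2]; split_ifs <;> omega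
    have : vf 0 = u := by rw [hvf]; simp only [e3, e4]; ext <;> simp
    rw [← this]
    exact hsupp 0 (by omega)
  · have e1 : c1 (a+b) = a := by simp only [hc1]; split_ifs <;> omega
    have e2 : c2 (a+b) = b := by simp only [hc2]; split_ifs <;> omega
    have hva : ((a : ℕ) : ZMod (2*k)) = v.1 - u.1 := by
      rw [hadef]; exact ZMod.natCast_rightInverse _
    have hvb : ((b : ℕ) : ZMod (2*k)) = v.2 - u.2 := by
      rw [hbdef]; exact ZMod.natCast_rightInverse _
    have : vf (a+b) = v := by
      rw [hvf]
      simp only [e1, e2, hva, hvb]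
      ext <;> simp <;> ring
    rw [← this]
    exact hsupp (a+b) (by omega)


/-- Mixed case: first difference at most `k`, second at least `k`:
anti-monotone staircase cycle based at `v`. -/
lemma part4_caseC (k : ℕ) (hk : 1 ≤ k) (u v : ATV k)
    (ha : (v.1 - u.1).val ≤ k) (hb : k ≤ (v.2 - u.2).val) :
    ∃ (x : ATV k) (w : (augTorusGrid k).Walk x x),
      w.IsCycle ∧ w.length = 2*k+1 ∧ u ∈ w.support ∧ v ∈ w.support := by
  haveI : NeZero (2*k) := ⟨by omega⟩
  set a := (v.1 - u.1).val with hadef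
  set b := (v.2 - u.2).val with hbdef
  have hblt : b < 2*k := ZMod.val_lt _
  -- segments: second-coordinate up (2k-b), first-coordinate down a,
  -- second up (b-k), first down (k-a)
  set c1 : ℕ → ℕ := fun t => if t ≤ 2*k-b then 0 else if t ≤ 2*k-b+a then t-(2*k-b)
    else if t ≤ k+a then a else t-k with hc1
  set c2 : ℕ → ℕ := fun t => if t ≤ 2*k-b then t else if t ≤ 2*k-b+a then 2*k-b
    else if t ≤ k+a then t-a else k with hc2
  set vf : ℕ → ATV k := fun t =>
    (v.1 - ((c1 t : ℕ) : ZMod (2*k)), v.2 + ((c2 t : ℕ) : ZMod (2*k))) with hvf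
  have hstep : ∀ t, t < 2*k →
      (c1 (t+1) = c1 t + 1 ∧ c2 (t+1) = c2 t) ∨ (c1 (t+1) = c1 t ∧ c2 (t+1) = c2 t + 1) := by
    intro t ht
    simp only [hc1, hc2]
    split_ifs <;> omega
  have hsum : ∀ t, t ≤ 2*k → c1 t + c2 t = t := by
    intro t ht
    simp only [hc1, hc2]
    split_ifs <;> omega
  have hadj : ∀ t, t < 2*k → (augTorusGrid k).Adj (vf t) (vf (t+1)) := by
    intro t ht
    refine AT_adj_of k hk _ _ ?_
    rcases hstep t ht with ⟨h1, h2⟩ | ⟨h1, h2⟩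
    · -- first coordinate decreases
      refine Or.inr (Or.inr (Or.inr ⟨by rw [hvf]; simp [h2], ?_⟩))
      rw [hvf]
      simp only [h1]
      push_cast
      ring
    · refine Or.inl ⟨by rw [hvf]; simp [h1], ?_⟩
      rw [hvf]
      simp only [h2]
      push_cast
      ring
  have h2k0 : (((2*k : ℕ)) : ZMod (2*k)) = 0 := ZMod.natCast_self _
  have hanti : vf (2*k) = vf 0 + ((k : ZMod (2*k)), (k : ZMod (2*k))) := by
    have e1 : c1 (2*k) = k := by simp only [hc1]; split_ifs <;> omega
    have e2 : c2 (2*k) = k := by simp only [hc2]; split_ifs <;> omega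
    have e3 : c1 0 = 0 := by simp only [hc1]; split_ifs <;> omega
    have e4 : c2 0 = 0 := by simp only [hc2]; split_ifs <;> omega
    rw [hvf]
    simp only [e1, e2, e3, e4]
    rw [Prod.ext_iff]
    push_cast at h2k0
    constructor
    · simp only [Prod.fst_add]; push_cast; linear_combination -h2k0
    · simp only [Prod.snd_add]; push_cast; ring
  obtain ⟨x, w, hcyc, hlen, hsupp⟩ := master_cycle k hk vf hadj hanti
    (fun p => p.2 - p.1) (by
      intro t ht
      simp only [hvf]
      have e3 : c1 0 = 0 := by simp only [hc1]; split_ifs <;> omega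
      have e4 : c2 0 = 0 := by simp only [hc2]; split_ifs <;> omega
      rw [e3, e4]
      have : ((c1 t : ℕ) : ZMod (2*k)) + ((c2 t : ℕ) : ZMod (2*k)) = (t : ZMod (2*k)) := by
        rw [← Nat.cast_add, hsum t ht]
      push_cast at this ⊢
      linear_combination this)
  refine ⟨x, w, hcyc, hlen, ?_, ?_⟩
  · -- u = vf (2k-b+a)
    have e1 : c1 (2*k-b+a) = a := by simp only [hc1]; split_ifs <;> omega
    have e2 : c2 (2*k-b+a) = 2*k-b := by simp only [hc2]; split_ifs <;> omega
    have hva : ((a : ℕ) : ZMod (2*k)) = v.1 - u.1 := by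
      rw [hadef]; exact ZMod.natCast_rightInverse _
    have hvb : ((b : ℕ) : ZMod (2*k)) = v.2 - u.2 := by
      rw [hbdef]; exact ZMod.natCast_rightInverse _
    have hcast : (((2*k-b : ℕ)) : ZMod (2*k)) = -(v.2 - u.2) := by
      rw [Nat.cast_sub (by omega)]
      rw [hvb, h2k0]
      ring
    have : vf (2*k-b+a) = u := by
      rw [hvf]
      simp only [e1, e2, hva, hcast]
      rw [Prod.ext_iff]
      constructor <;> · simp only []; ring
    rw [← this]
    exact hsupp (2*k-b+a) (by omega)
  · have e3 : c1 0 = 0 := by simp only [hc1]; split_ifs <;> omega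
    have e4 : c2 0 = 0 := by simp only [hc2]; split_ifs <;> omega
    have : vf 0 = v := by
      rw [hvf]; simp only [e3, e4]
      rw [Prod.ext_iff]
      constructor <;> simp
    rw [← this]
    exact hsupp 0 (by omega)

lemma part4 (k : ℕ) (hk : 1 ≤ k) (u v : ATV k) :
    ∃ (x : ATV k) (w : (augTorusGrid k).Walk x x),
      w.IsCycle ∧ w.length = 2*k+1 ∧ u ∈ w.support ∧ v ∈ w.support := by
  haveI : NeZero (2*k) := ⟨by omega⟩
  set a := (v.1 - u.1).val with hadef
  set b := (v.2 - u.2).val with hbdef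
  have halt : a < 2*k := ZMod.val_lt _
  have hblt : b < 2*k := ZMod.val_lt _
  have hnega : u.1 - v.1 = -(v.1 - u.1) := by ring
  have hnegb : u.2 - v.2 = -(v.2 - u.2) := by ring
  have hna : (u.1 - v.1).val = if a = 0 then 0 else 2*k - a := by
    rw [hnega, ZMod.neg_val]
    congr 1
    simp only [eq_iff_iff]
    rw [hadef, ZMod.val_eq_zero]
  have hnb : (u.2 - v.2).val = if b = 0 then 0 else 2*k - b := by
    rw [hnegb, ZMod.neg_val]
    congr 1
    simp only [eq_iff_iff]
    rw [hbdef, ZMod.val_eq_zero]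
  rcases le_or_gt a k with ha | ha
  · rcases le_or_gt b k with hb | hb
    · exact part4_caseA k hk u v ha hb
    · exact part4_caseC k hk u v ha (by omega)
  · rcases le_or_gt b k with hb | hb
    · rcases Nat.eq_zero_or_pos b with hb0 | hb0
      · obtain ⟨x, w, h1, h2, h3, h4⟩ := part4_caseA k hk v u
          (by rw [hna]; split_ifs <;> omega)
          (by rw [hnb]; split_ifs <;> omega)
        exact ⟨x, w, h1, h2, h4, h3⟩
      · obtain ⟨x, w, h1, h2, h3, h4⟩ := part4_caseC k hk v u
          (by rw [hna]; split_ifs <;> omega)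
          (by rw [hnb]; split_ifs <;> omega)
        exact ⟨x, w, h1, h2, h4, h3⟩
    · obtain ⟨x, w, h1, h2, h3, h4⟩ := part4_caseA k hk v u
        (by rw [hna]; split_ifs <;> omega)
        (by rw [hnb]; split_ifs <;> omega)
      exact ⟨x, w, h1, h2, h4, h3⟩


lemma AT_adj_translate (k : ℕ) (c a b : ATV k) (h : (augTorusGrid k).Adj a b) :
    (augTorusGrid k).Adj (a + c) (b + c) := by
  rw [augTorusGrid, fromRel_adj] at h ⊢
  obtain ⟨hne, hrel⟩ := h
  refine ⟨fun he => hne (by exact add_right_cancel he), ?_⟩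
  simp only [Prod.fst_add, Prod.snd_add]
  rcases hrel with (⟨h1, h2⟩ | ⟨h1, h2⟩ | h1) | (⟨h1, h2⟩ | ⟨h1, h2⟩ | h1)
  · exact Or.inl (Or.inl ⟨by rw [h1], by rw [h2]; ring⟩)
  · exact Or.inl (Or.inr (Or.inl ⟨by rw [h1], by rw [h2]; ring⟩))
  · exact Or.inl (Or.inr (Or.inr (by rw [h1]; ring)))
  · exact Or.inr (Or.inl ⟨by rw [h1], by rw [h2]; ring⟩)
  · exact Or.inr (Or.inr (Or.inl ⟨by rw [h1], by rw [h2]; ring⟩))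
  · exact Or.inr (Or.inr (Or.inr (by rw [h1]; ring)))

/-- Translation automorphisms of the augmented toroidal grid. -/
def ATtranslate (k : ℕ) (c : ATV k) : augTorusGrid k ≃g augTorusGrid k where
  toEquiv := Equiv.addRight c
  map_rel_iff' := by
    intro a b
    simp only [Equiv.coe_addRight]
    constructor
    · intro h
      have := AT_adj_translate k (-c) _ _ h
      simpa using this
    · exact AT_adj_translate k c a b

lemma part3 (k : ℕ) (u v : ATV k) :
    ∃ φ : augTorusGrid k ≃g augTorusGrid k, φ u = v := by
  refine ⟨ATtranslate k (v - u), ?_⟩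
  show u + (v - u) = v
  ring


lemma PC_adj_normal (k : ℕ) {x z : Fin (2*k) → ZMod 2} (h : (PC k).Adj x z) :
    (∃ i : Fin (2*k), z = x + fun j => if j = i then 1 else 0) ∨ z = x + fun _ => 1 := by
  have flip : ∀ u v w : ZMod 2, u = v + w → v = u + w := by decide
  rw [PC, fromRel_adj] at h
  rcases h.2 with (⟨i, h1⟩ | h1) | (⟨i, h1⟩ | h1)
  · exact Or.inl ⟨i, h1⟩
  · exact Or.inr h1
  · exact Or.inl ⟨i, funext fun j => flip _ _ _ (congrFun h1 j)⟩
  · exact Or.inr (funext fun j => flip _ _ _ (congrFun h1 j))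

lemma PC_walk_counts (k : ℕ) {x y : Fin (2*k) → ZMod 2} (w : (PC k).Walk x y) :
    ∃ (m : ℕ) (c : Fin (2*k) → ℕ), w.length = m + ∑ i, c i ∧
      ∀ j, y j = x j + ((m + c j : ℕ) : ZMod 2) := by
  induction w with
  | nil => exact ⟨0, fun _ => 0, by simp, by simp⟩
  | cons h p ih =>
    obtain ⟨m, c, hl, hc⟩ := ih
    rcases PC_adj_normal k h with ⟨i, hz⟩ | hz
    · refine ⟨m, fun j => c j + (if j = i then 1 else 0), ?_, ?_⟩
      · rw [SimpleGraph.Walk.length_cons, hl, Finset.sum_add_distrib]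
        rw [Finset.sum_ite_eq' Finset.univ i (fun _ => 1)]
        simp
        omega
      · intro j
        have h1 := hc j
        have h2 : _ = _ := congrFun hz j
        rw [h1, h2]
        simp only [Pi.add_apply]
        push_cast
        split_ifs <;> ring
    · refine ⟨m + 1, c, ?_, ?_⟩
      · rw [SimpleGraph.Walk.length_cons, hl]
        omega
      · intro j
        have h1 := hc j
        have h2 : _ = _ := congrFun hz j
        rw [h1, h2]
        simp only [Pi.add_apply]
        push_cast
        ring

lemma PC_odd_closed (k : ℕ) (hk : 1 ≤ k) (x : Fin (2*k) → ZMod 2)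
    (w : (PC k).Walk x x) (hodd : Odd w.length) : 2*k+1 ≤ w.length := by
  obtain ⟨m, c, hl, hc⟩ := PC_walk_counts k w
  have hpar : ∀ j, 2 ∣ m + c j := by
    intro j
    have h1 := hc j
    have h2 : ((m + c j : ℕ) : ZMod 2) = 0 := by
      have := (left_eq_add).mp h1
      exact this
    rwa [ZMod.natCast_eq_zero_iff] at h2
  rcases Nat.even_or_odd m with hm | hm
  · exfalso
    obtain ⟨r, hr⟩ := hm
    have hce : ∀ j, 2 ∣ c j := by
      intro j
      have := hpar j
      omega
    have hs : 2 ∣ ∑ i, c i := Finset.dvd_sum fun i _ => hce i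
    obtain ⟨t, ht⟩ := hodd
    omega
  · obtain ⟨t, ht⟩ := hm
    have hc1 : ∀ j : Fin (2*k), 1 ≤ c j := by
      intro j
      have := hpar j
      omega
    have hs : 2*k ≤ ∑ i, c i := by
      calc 2*k = ∑ _i : Fin (2*k), 1 := by simp
      _ ≤ ∑ i, c i := Finset.sum_le_sum fun i _ => hc1 i
    omega


/-- Encoding of one cyclic coordinate into `k` bits. -/
def encAT (k : ℕ) (x : ZMod (2*k)) (s : ℕ) : ZMod 2 :=
  if s < x.val ∧ x.val ≤ s + k then 1 else 0

/-- Encoding of the torus into `2k` bits. -/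
def embAT (k : ℕ) (p : ATV k) : Fin (2*k) → ZMod 2 :=
  fun t => if t.val < k then encAT k p.1 t.val else encAT k p.2 (t.val - k)

lemma encAT_ne_of_lt (k : ℕ) (hk : 1 ≤ k) (x y : ZMod (2*k)) (hxy : x.val < y.val) :
    ∃ s, s < k ∧ encAT k x s ≠ encAT k y s := by
  haveI : NeZero (2*k) := ⟨by omega⟩
  have hx : x.val < 2*k := ZMod.val_lt x
  have hy : y.val < 2*k := ZMod.val_lt y
  rcases le_or_gt y.val k with hyk | hyk
  · refine ⟨y.val - 1, by omega, ?_⟩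
    simp only [encAT]
    rw [if_neg (by rintro ⟨h1, h2⟩; omega), if_pos ⟨by omega, by omega⟩]
    exact zero_ne_one
  · rcases le_or_gt k x.val with hxk | hxk
    · refine ⟨x.val - k, by omega, ?_⟩
      simp only [encAT]
      rw [if_pos ⟨by omega, by omega⟩, if_neg (by rintro ⟨h1, h2⟩; omega)]
      exact one_ne_zero
    · rcases Nat.eq_zero_or_pos x.val with hx0 | hx0
      · refine ⟨k - 1, by omega, ?_⟩
        simp only [encAT]
        rw [if_neg (by rintro ⟨h1, h2⟩; omega), if_pos ⟨by omega, by omega⟩]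
        exact zero_ne_one
      · refine ⟨0, by omega, ?_⟩
        simp only [encAT]
        rw [if_pos ⟨by omega, by omega⟩, if_neg (by rintro ⟨h1, h2⟩; omega)]
        exact one_ne_zero

lemma encAT_inj (k : ℕ) (hk : 1 ≤ k) (x y : ZMod (2*k))
    (h : ∀ s, s < k → encAT k x s = encAT k y s) : x = y := by
  haveI : NeZero (2*k) := ⟨by omega⟩
  have hval : x.val = y.val := by
    by_contra hne
    rcases Nat.lt_or_ge x.val y.val with hlt | hge
    · obtain ⟨s, hs, hne2⟩ := encAT_ne_of_lt k hk x y hlt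
      exact hne2 (h s hs)
    · obtain ⟨s, hs, hne2⟩ := encAT_ne_of_lt k hk y x (by omega)
      exact hne2 (h s hs).symm
  calc x = ((x.val : ℕ) : ZMod (2*k)) := (ZMod.natCast_rightInverse x).symm
  _ = ((y.val : ℕ) : ZMod (2*k)) := by rw [hval]
  _ = y := ZMod.natCast_rightInverse y

lemma embAT_inj (k : ℕ) (hk : 1 ≤ k) : Function.Injective (embAT k) := by
  intro p q h
  have h1 : p.1 = q.1 := by
    refine encAT_inj k hk _ _ fun s hs => ?_
    have := congrFun h ⟨s, by omega⟩
    simpa only [embAT, if_pos hs] using this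
  have h2 : p.2 = q.2 := by
    refine encAT_inj k hk _ _ fun s hs => ?_
    have := congrFun h ⟨k + s, by omega⟩
    simp only [embAT] at this
    rw [if_neg (by show ¬ (k + s < k); omega), if_neg (by show ¬ (k + s < k); omega)] at this
    simpa only [Nat.add_sub_cancel_left] using this
  exact Prod.ext h1 h2

lemma encAT_succ (k : ℕ) (hk : 1 ≤ k) (x : ZMod (2*k)) (s : ℕ) (hs : s < k) :
    encAT k (x + 1) s =
      encAT k x s + (if s = (if x.val < k then x.val else x.val - k) then 1 else 0) := by
  haveI : NeZero (2*k) := ⟨by omega⟩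
  have hx : x.val < 2*k := ZMod.val_lt x
  have hone : (1 : ZMod (2*k)).val = 1 := by
    rw [← Nat.cast_one, ZMod.val_cast_of_lt (by omega)]
  have hval : (x + 1).val = (x.val + 1) % (2*k) := by rw [ZMod.val_add, hone]
  rcases Nat.lt_or_ge x.val (2*k - 1) with hc | hc
  · have hval2 : (x + 1).val = x.val + 1 := by rw [hval, Nat.mod_eq_of_lt (by omega)]
    simp only [encAT, hval2]
    split_ifs <;> first | decide | (exfalso; omega)
  · have hxe : x.val = 2*k - 1 := by omega
    have hval2 : (x + 1).val = 0 := by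
      rw [hval, hxe]
      have : 2*k - 1 + 1 = 2*k := by omega
      rw [this, Nat.mod_self]
    simp only [encAT, hval2]
    split_ifs <;> first | decide | (exfalso; omega)

lemma encAT_addk (k : ℕ) (hk : 1 ≤ k) (x : ZMod (2*k)) (s : ℕ) (hs : s < k) :
    encAT k (x + (k : ZMod (2*k))) s = encAT k x s + 1 := by
  haveI : NeZero (2*k) := ⟨by omega⟩
  have hx : x.val < 2*k := ZMod.val_lt x
  have hvk : ((k : ℕ) : ZMod (2*k)).val = k := ZMod.val_cast_of_lt (by omega)
  have hval : (x + (k : ZMod (2*k))).val = (x.val + k) % (2*k) := by rw [ZMod.val_add, hvk]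
  rcases Nat.lt_or_ge x.val k with hc | hc
  · have hval2 : (x + (k : ZMod (2*k))).val = x.val + k := by
      rw [hval, Nat.mod_eq_of_lt (by omega)]
    simp only [encAT, hval2]
    split_ifs <;> first | decide | (exfalso; omega)
  · have hval2 : (x + (k : ZMod (2*k))).val = x.val - k := by
      rw [hval]
      have h1 : x.val + k = (x.val - k) + 2*k := by omega
      rw [h1, Nat.add_mod_right, Nat.mod_eq_of_lt (by omega)]
    simp only [encAT, hval2]
    split_ifs <;> first | decide | (exfalso; omega)

lemma embAT_stepY (k : ℕ) (hk : 1 ≤ k) (a b : ATV k) (h1 : a.1 = b.1)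
    (h2 : b.2 = a.2 + 1) :
    ∃ i : Fin (2*k), embAT k b = embAT k a + fun j => if j = i then 1 else 0 := by
  haveI : NeZero (2*k) := ⟨by omega⟩
  have hv : a.2.val < 2*k := ZMod.val_lt _
  set j0 := if a.2.val < k then a.2.val else a.2.val - k with hj0def
  have hj0 : j0 < k := by rw [hj0def]; split_ifs <;> omega
  refine ⟨⟨k + j0, by omega⟩, ?_⟩
  funext t
  simp only [embAT, Pi.add_apply]
  by_cases htk : t.val < k
  · rw [if_pos htk, if_pos htk, ← h1,
      if_neg (fun heq : t = _ => by
        have := congrArg Fin.val heq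
        simp at this
        omega),
      add_zero]
  · rw [if_neg htk, if_neg htk, h2, encAT_succ k hk a.2 (t.val - k) (by omega)]
    congr 1
    have hiff : (t = (⟨k + j0, by omega⟩ : Fin (2*k))) ↔ (t.val - k = j0) := by
      rw [Fin.ext_iff]
      show t.val = k + j0 ↔ t.val - k = j0
      omega
    simp only [← hj0def, hiff]

lemma embAT_stepX (k : ℕ) (hk : 1 ≤ k) (a b : ATV k) (h1 : a.2 = b.2)
    (h2 : b.1 = a.1 + 1) :
    ∃ i : Fin (2*k), embAT k b = embAT k a + fun j => if j = i then 1 else 0 := by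
  haveI : NeZero (2*k) := ⟨by omega⟩
  have hv : a.1.val < 2*k := ZMod.val_lt _
  set j0 := if a.1.val < k then a.1.val else a.1.val - k with hj0def
  have hj0 : j0 < k := by rw [hj0def]; split_ifs <;> omega
  refine ⟨⟨j0, by omega⟩, ?_⟩
  funext t
  simp only [embAT, Pi.add_apply]
  by_cases htk : t.val < k
  · rw [if_pos htk, if_pos htk, h2, encAT_succ k hk a.1 t.val htk]
    congr 1
    have hiff : (t = (⟨j0, by omega⟩ : Fin (2*k))) ↔ (t.val = j0) := by
      rw [Fin.ext_iff]
    simp only [← hj0def, hiff]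
  · rw [if_neg htk, if_neg htk, ← h1,
      if_neg (fun heq : t = _ => by
        have := congrArg Fin.val heq
        simp at this
        omega),
      add_zero]

lemma embAT_anti (k : ℕ) (hk : 1 ≤ k) (a b : ATV k)
    (h : b = a + ((k : ZMod (2*k)), (k : ZMod (2*k)))) :
    embAT k b = embAT k a + fun _ => 1 := by
  have hb1 : b.1 = a.1 + (k : ZMod (2*k)) := by rw [h]; rfl
  have hb2 : b.2 = a.2 + (k : ZMod (2*k)) := by rw [h]; rfl
  funext t
  simp only [embAT, Pi.add_apply]
  by_cases htk : t.val < k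
  · rw [if_pos htk, if_pos htk, hb1, encAT_addk k hk a.1 t.val htk]
  · rw [if_neg htk, if_neg htk, hb2, encAT_addk k hk a.2 (t.val - k) (by
      have : t.val < 2*k := t.isLt
      omega)]

lemma part1 (k : ℕ) (hk : 1 ≤ k) :
    ∃ f : augTorusGrid k →g PC k, Function.Injective f := by
  refine ⟨⟨embAT k, ?_⟩, embAT_inj k hk⟩
  intro a b hab
  rw [augTorusGrid, fromRel_adj] at hab
  rw [PC, fromRel_adj]
  refine ⟨fun h => hab.1 (embAT_inj k hk h), ?_⟩
  rcases hab.2 with (⟨h1, h2⟩ | ⟨h1, h2⟩ | h1) | (⟨h1, h2⟩ | ⟨h1, h2⟩ | h1)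
  · exact Or.inl (Or.inl (embAT_stepY k hk a b h1 h2))
  · exact Or.inl (Or.inl (embAT_stepX k hk a b h1 h2))
  · exact Or.inl (Or.inr (embAT_anti k hk a b h1))
  · exact Or.inr (Or.inl (embAT_stepY k hk b a h1 h2))
  · exact Or.inr (Or.inl (embAT_stepX k hk b a h1 h2))
  · exact Or.inr (Or.inr (embAT_anti k hk b a h1))

/-- `AT(2k,2k)` is (isomorphic to) a subgraph of `PC(2k)`, has odd-girth exactly
`2k+1`, is vertex-transitive, and every two of its vertices lie on a common
`(2k+1)`-cycle. -/
theorem augTorusGrid_properties (k : ℕ) (hk : 1 ≤ k) :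
    (∃ f : augTorusGrid k →g PC k, Function.Injective f) ∧
    hasOddGirth (augTorusGrid k) (2*k+1) ∧
    (∀ u v : ZMod (2*k) × ZMod (2*k),
      ∃ φ : augTorusGrid k ≃g augTorusGrid k, φ u = v) ∧
    (∀ u v : ZMod (2*k) × ZMod (2*k),
      ∃ (x : ZMod (2*k) × ZMod (2*k)) (w : (augTorusGrid k).Walk x x),
        w.IsCycle ∧ w.length = 2*k+1 ∧ u ∈ w.support ∧ v ∈ w.support) := by
  obtain ⟨f, hf⟩ := part1 k hk
  refine ⟨⟨f, hf⟩, ⟨?_, ?_⟩, fun u v => part3 k u v, fun u v => part4 k hk u v⟩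
  · intro x w _ hodd
    have h1 : Odd (SimpleGraph.Walk.map f w).length := by
      rwa [SimpleGraph.Walk.length_map]
    have h2 := PC_odd_closed k hk (f x) (w.map f) h1
    rwa [SimpleGraph.Walk.length_map] at h2
  · obtain ⟨x, w, h1, h2, _, _⟩ := part4 k hk 0 0
    exact ⟨x, w, h1, h2⟩
end
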